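/- Let A ∈ ℝ^{m×n} have rank r and exactly Z zero columns. Let S be the vector space of pairs (M, ξ) ∈ ℝ^{m×m} × ℝ^n with M A = A diag(ξ). Then dim(S) = cl⊕(A) + (m−1)(m−r) + Z. -/

import Mathlib

noncomputable def clusteringNumber {m n : ℕ} (A : Matrix (Fin m) (Fin n) ℝ) : ℕ :=
  sSup {S : ℕ | ∃ U : Fin S → Submodule ℝ (Fin m → ℝ),
    (∀ i, U i ≠ ⊥) ∧ iSupIndep U ∧ ∀ j : Fin n, ∃ i, (fun k => A k j) ∈ U i}

/-- The solution space of the linear system `M A = A diag(ξ)`. -/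
noncomputable def solSpace {m n : ℕ} (A : Matrix (Fin m) (Fin n) ℝ) :
    Submodule ℝ (Matrix (Fin m) (Fin m) ℝ × (Fin n → ℝ)) where
  carrier := {p | p.1 * A = A * Matrix.diagonal p.2}
  add_mem' := by
    intro a b ha hb
    simp only [Set.mem_setOf_eq, Prod.fst_add, Prod.snd_add] at *
    have hd : Matrix.diagonal (a.2 + b.2) = Matrix.diagonal a.2 + Matrix.diagonal b.2 := by
      ext i j; by_cases h : i = j <;> simp [Matrix.diagonal_apply, h]
    rw [Matrix.add_mul, ha, hb, hd, Matrix.mul_add]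
  zero_mem' := by
    simp only [Set.mem_setOf_eq, Prod.fst_zero, Prod.snd_zero]
    have hd : Matrix.diagonal (0 : Fin n → ℝ) = 0 := by
      ext i j; by_cases h : i = j <;> simp [Matrix.diagonal_apply, h]
    rw [Matrix.zero_mul, hd, Matrix.mul_zero]
  smul_mem' := by
    intro c a ha
    simp only [Set.mem_setOf_eq, Prod.smul_fst, Prod.smul_snd] at *
    rw [Matrix.smul_mul, ha, Matrix.diagonal_smul, Matrix.mul_smul]

namespace Stmt6Aux

open Module Submodule Matrix

variable {m n : ℕ} (A : Matrix (Fin m) (Fin n) ℝ)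

/-- the `j`-th column of `A` -/
def col (j : Fin n) : Fin m → ℝ := fun k => A k j

/-- the set of clustering sizes -/
def clusterSet : Set ℕ :=
  {S : ℕ | ∃ U : Fin S → Submodule ℝ (Fin m → ℝ),
    (∀ i, U i ≠ ⊥) ∧ iSupIndep U ∧ ∀ j : Fin n, ∃ i, col A j ∈ U i}

lemma clusteringNumber_eq : clusteringNumber A = sSup (clusterSet A) := rfl

/-- the space of feasible `ξ` -/
noncomputable def feas : Submodule ℝ (Fin n → ℝ) := (solSpace A).map (LinearMap.snd ℝ _ _)

lemma mem_feas {ξ : Fin n → ℝ} : ξ ∈ feas A ↔ ∃ M : Matrix (Fin m) (Fin m) ℝ, M * A = A * Matrix.diagonal ξ := by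
  constructor
  · rintro ⟨⟨M, ξ'⟩, h, rfl⟩; exact ⟨M, h⟩
  · rintro ⟨M, h⟩; exact ⟨(M, ξ), h, rfl⟩

/-- multiplication by a matrix on columns -/
lemma mul_col {M : Matrix (Fin m) (Fin m) ℝ} {ξ : Fin n → ℝ}
    (h : M * A = A * Matrix.diagonal ξ) (j : Fin n) :
    M.mulVec (col A j) = ξ j • col A j := by
  funext i
  have := congrFun (congrFun h i) j
  simp only [Matrix.mul_apply, Matrix.mul_diagonal] at this ⊢
  rw [Finset.sum_eq_single j (by intro b _ hb; rw [Matrix.diagonal_apply_ne _ hb, mul_zero])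
    (by intro h; exact absurd (Finset.mem_univ j) h), Matrix.diagonal_apply_eq] at this
  simpa [Matrix.mulVec, dotProduct, col, mul_comm] using this

lemma single_mem_feas {j₀ : Fin n} (h : col A j₀ = 0) : Pi.single j₀ (1:ℝ) ∈ feas A := by
  rw [mem_feas]
  refine ⟨0, ?_⟩
  rw [Matrix.zero_mul]
  ext i j
  rw [Matrix.mul_diagonal]
  by_cases hj : j = j₀
  · subst hj
    have : A i j = 0 := congrFun h i
    simp [this]
  · simp [Pi.single_apply, hj]

/-- multiplication by `A` on the right, as a linear map -/
noncomputable def mulA : Matrix (Fin m) (Fin m) ℝ →ₗ[ℝ] Matrix (Fin m) (Fin n) ℝ where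
  toFun M := M * A
  map_add' M N := Matrix.add_mul M N A
  map_smul' c M := by simp [Matrix.smul_mul]

lemma mem_matKer_iff {M : Matrix (Fin m) (Fin m) ℝ} :
    M * A = 0 ↔ ∀ i, M i ∈ LinearMap.ker Aᵀ.mulVecLin := by
  have key : ∀ i, Aᵀ.mulVec (M i) = fun j => (M * A) i j := by
    intro i
    funext j
    simp [Matrix.mulVec, dotProduct, Matrix.mul_apply, Matrix.transpose_apply, mul_comm]
  constructor
  · intro h i
    rw [LinearMap.mem_ker]
    show Aᵀ.mulVec (M i) = 0
    rw [key, h]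
    rfl
  · intro h
    ext i j
    have h2 : Aᵀ.mulVec (M i) = 0 := h i
    have := congrFun ((key i).symm.trans h2) j
    simpa using this

lemma finrank_matKer :
    finrank ℝ (LinearMap.ker (mulA A)) = m * (m - A.rank) := by
  have hK0 : finrank ℝ (LinearMap.ker (Aᵀ.mulVecLin)) = m - A.rank := by
    have h1 := LinearMap.finrank_range_add_finrank_ker (Aᵀ.mulVecLin)
    rw [Module.finrank_pi] at h1
    have h2 : finrank ℝ (LinearMap.range Aᵀ.mulVecLin) = A.rank := by
      rw [← Matrix.rank_transpose A]
      rfl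
    rw [h2, Fintype.card_fin] at h1
    omega
  have e : (LinearMap.ker (mulA A)) ≃ₗ[ℝ] (Fin m → LinearMap.ker (Aᵀ.mulVecLin)) :=
  { toFun := fun M i => ⟨(M : Matrix (Fin m) (Fin m) ℝ) i,
      ((mem_matKer_iff A).1 (LinearMap.mem_ker.mp M.2) i)⟩
    map_add' := fun M N => rfl
    map_smul' := fun c M => rfl
    invFun := fun g => ⟨Matrix.of (fun i => (g i : Fin m → ℝ)),
      LinearMap.mem_ker.mpr ((mem_matKer_iff A).2 (fun i => (g i).2))⟩
    left_inv := fun M => rfl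
    right_inv := fun g => rfl }
  rw [e.finrank_eq, Module.finrank_pi_fintype, hK0]
  simp [Finset.sum_const, mul_comm]

/-- step 1 : dimension of the solution space vs. dimension of feasible set -/
lemma finrank_solSpace :
    finrank ℝ (solSpace A) = finrank ℝ (feas A) + m * (m - A.rank) := by
  set f := (LinearMap.snd ℝ (Matrix (Fin m) (Fin m) ℝ) (Fin n → ℝ)).comp (solSpace A).subtype
    with hf
  have hrn := LinearMap.finrank_range_add_finrank_ker f
  have hrange : LinearMap.range f = feas A := by
    rw [hf, LinearMap.range_comp, Submodule.range_subtype]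
    rfl
  have hker : finrank ℝ (LinearMap.ker f) = m * (m - A.rank) := by
    rw [← finrank_matKer A]
    refine LinearEquiv.finrank_eq ?_
    refine
    { toFun := fun p => ⟨p.1.1.1, LinearMap.mem_ker.mpr ?_⟩
      map_add' := fun p q => rfl
      map_smul' := fun c p => rfl
      invFun := fun M => ⟨⟨(M.1, 0), ?_⟩, ?_⟩
      left_inv := fun p => ?_
      right_inv := fun M => rfl }
    · have hsol : p.1.1.1 * A = A * Matrix.diagonal p.1.1.2 := p.1.2
      have hz : p.1.1.2 = 0 := LinearMap.mem_ker.mp p.2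
      show p.1.1.1 * A = 0
      rw [hsol, hz]
      have : Matrix.diagonal (0 : Fin n → ℝ) = 0 := Matrix.diagonal_zero
      rw [this, Matrix.mul_zero]
    · show M.1 * A = A * Matrix.diagonal 0
      have : Matrix.diagonal (0 : Fin n → ℝ) = 0 := Matrix.diagonal_zero
      rw [this, Matrix.mul_zero]
      exact LinearMap.mem_ker.mp M.2
    · exact LinearMap.mem_ker.mpr rfl
    · apply Subtype.ext
      apply Subtype.ext
      refine Prod.ext rfl ?_
      exact (LinearMap.mem_ker.mp p.2).symm
  rw [← hrn, hker, hrange]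

lemma disjoint_sup_of {p q r : Submodule ℝ (Fin m → ℝ)} (h1 : Disjoint p (q ⊔ r))
    (h2 : Disjoint q r) : Disjoint (p ⊔ q) r := by
  rw [Submodule.disjoint_def] at *
  intro x hx hxr
  rw [Submodule.mem_sup] at hx
  obtain ⟨α, hα, β, hβ, rfl⟩ := hx
  have hα0 : α = 0 := by
    refine h1 α hα ?_
    have hab : α = (α + β) - β := by ring
    rw [hab]
    exact Submodule.sub_mem _ (Submodule.mem_sup_right hxr) (Submodule.mem_sup_left hβ)
  have hβ0 : β = 0 := h2 β hβ (by rwa [hα0, zero_add] at hxr)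
  rw [hα0, hβ0, add_zero]

lemma disjoint_finsetSup {ι : Type*} [DecidableEq ι] {U : ι → Submodule ℝ (Fin m → ℝ)}
    (hU : iSupIndep U) :
    ∀ s t : Finset ι, Disjoint s t → Disjoint (s.sup U) (t.sup U) := by
  have key : ∀ s : Finset ι, Disjoint (s.sup U) (⨆ i, ⨆ (_ : i ∉ s), U i) := by
    intro s
    induction s using Finset.induction_on with
    | empty => simp
    | @insert a s ha ih =>
      rw [Finset.sup_insert]
      refine disjoint_sup_of ?_ (ih.mono_right ?_)
      · refine (hU a).mono_right ?_
        refine sup_le ?_ ?_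
        · exact Finset.sup_le fun j hj =>
            le_iSup₂ (f := fun j (_ : j ≠ a) => U j) j (fun h => ha (h ▸ hj))
        · exact iSup₂_le fun j hj =>
            le_iSup₂ (f := fun j (_ : j ≠ a) => U j) j
              (fun h => hj (h ▸ Finset.mem_insert_self a s))
      · exact iSup₂_le fun j hj =>
          le_iSup₂ (f := fun j (_ : j ∉ s) => U j) j (fun h => hj (Finset.mem_insert_of_mem h))
  intro s t hst
  refine (key s).mono_right ?_
  exact Finset.sup_le fun j hj =>
    le_iSup₂ (f := fun j (_ : j ∉ s) => U j) j (Finset.disjoint_right.mp hst hj)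

/-- upper bound for clustering sizes -/
lemma upper {S : ℕ} (hS : S ∈ clusterSet A) :
    S + Fintype.card {j : Fin n // ∀ i, A i j = 0} ≤ finrank ℝ (feas A) + (m - A.rank) := by
  classical
  obtain ⟨U, hbot, hind, hcov⟩ := hS
  set used : Finset (Fin S) := Finset.univ.filter (fun i => ∃ j, col A j ≠ 0 ∧ col A j ∈ U i)
    with hused
  set C : Submodule ℝ (Fin m → ℝ) := Submodule.span ℝ (Set.range (col A)) with hC
  have hCrank : finrank ℝ C = A.rank := by
    rw [Matrix.rank_eq_finrank_span_cols, hC]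
    have hr : Set.range (col A) = Set.range Aᵀ := by
      ext x
      constructor <;> rintro ⟨j, rfl⟩
      · exact ⟨j, rfl⟩
      · exact ⟨j, rfl⟩
    rw [hr]
    rfl
  have hCused : C ≤ used.sup U := by
    rw [hC, Submodule.span_le]
    rintro x ⟨j, rfl⟩
    by_cases hz : col A j = 0
    · rw [hz]; exact Submodule.zero_mem _
    · obtain ⟨i, hi⟩ := hcov j
      have hiu : i ∈ used := by
        rw [hused, Finset.mem_filter]
        exact ⟨Finset.mem_univ i, j, hz, hi⟩
      exact (Finset.le_sup hiu : U i ≤ used.sup U) hi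
  -- Step A: the number of unused indices is at most `m - rank`
  have hcard1 : usedᶜ.card + A.rank ≤ m := by
    have hch : ∀ i : {i : Fin S // i ∈ usedᶜ}, ∃ v, v ∈ U i.1 ∧ v ≠ 0 := fun i =>
      Submodule.exists_mem_ne_zero_of_ne_bot (hbot i.1)
    choose u hu hu0 using hch
    have hindu : LinearIndependent ℝ u :=
      (hind.comp Subtype.val_injective).linearIndependent _ hu hu0
    let b := Module.finBasis ℝ C
    have hbc : LinearIndependent ℝ (fun t => ((b t : C) : Fin m → ℝ)) :=
      b.linearIndependent.map' C.subtype (Submodule.ker_subtype C)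
    have hdisj : Disjoint (Submodule.span ℝ (Set.range u))
        (Submodule.span ℝ (Set.range (fun t => ((b t : C) : Fin m → ℝ)))) := by
      have h1 : Submodule.span ℝ (Set.range u) ≤ usedᶜ.sup U := by
        rw [Submodule.span_le]
        rintro x ⟨i, rfl⟩
        exact (Finset.le_sup i.2 : U i.1 ≤ usedᶜ.sup U) (hu i)
      have h2 : Submodule.span ℝ (Set.range (fun t => ((b t : C) : Fin m → ℝ))) ≤ C := by
        rw [Submodule.span_le]
        rintro x ⟨t, rfl⟩
        exact (b t).2
      exact ((disjoint_finsetSup hind usedᶜ used (disjoint_compl_left)).mono h1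
        (h2.trans hCused))
    have hcard := (hindu.sum_type hbc hdisj).fintype_card_le_finrank
    rw [Fintype.card_sum, Fintype.card_coe, Fintype.card_fin, Module.finrank_pi,
      Fintype.card_fin, hCrank] at hcard
    exact hcard
  -- Step B: feasible indicator vectors
  let vξ : {i : Fin S // i ∈ used} → (Fin n → ℝ) := fun i j =>
    if col A j ∈ U i.1 ∧ col A j ≠ 0 then 1 else 0
  have hfeas : ∀ i : {i : Fin S // i ∈ used}, (vξ i) ∈ feas A := by
    intro i
    rw [mem_feas]
    obtain ⟨Wc, hWc⟩ := Submodule.exists_isCompl (U i.1 ⊔ (⨆ j, ⨆ (_ : j ≠ i.1), U j))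
    set R : Submodule ℝ (Fin m → ℝ) := ⨆ j, ⨆ (_ : j ≠ i.1), U j with hR
    set K := R ⊔ Wc with hK
    have hdisjK : Disjoint (U i.1) K := by
      rw [Submodule.disjoint_def]
      intro x hxU hxK
      rw [hK, Submodule.mem_sup] at hxK
      obtain ⟨y, hy, w, hw, hxyw⟩ := hxK
      have hwmem : w ∈ U i.1 ⊔ R := by
        have : w = x - y := by rw [← hxyw]; ring
        rw [this]
        exact Submodule.sub_mem _ (Submodule.mem_sup_left hxU) (Submodule.mem_sup_right hy)
      have hw0 : w = 0 := Submodule.disjoint_def.mp hWc.disjoint w hwmem hw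
      have hxy : x = y := by rw [← hxyw, hw0, add_zero]
      exact Submodule.disjoint_def.mp (hind i.1) x hxU (hxy ▸ hy)
    have hcompl : IsCompl (U i.1) K := by
      constructor
      · exact hdisjK
      · rw [codisjoint_iff, hK, ← sup_assoc]
        exact codisjoint_iff.mp hWc.codisjoint
    set P := (U i.1).subtype ∘ₗ ((U i.1).linearProjOfIsCompl K hcompl) with hP
    refine ⟨LinearMap.toMatrix' P, ?_⟩
    ext i' j
    rw [Matrix.mul_diagonal]
    have hPcol : P (col A j) = (vξ i) j • col A j := by
      by_cases h1 : col A j ∈ U i.1 ∧ col A j ≠ 0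
      · have : (vξ i) j = 1 := if_pos h1
        rw [this, one_smul, hP]
        show (U i.1).subtype (((U i.1).projectionOnto K hcompl) (col A j)) = col A j
        have := Submodule.projectionOnto_apply_of_mem_left hcompl h1.1
        rw [this]
        rfl
      · have hv0 : (vξ i) j = 0 := if_neg h1
        rw [hv0, zero_smul]
        by_cases hz : col A j = 0
        · rw [hz, map_zero]
        · obtain ⟨i'', hi''⟩ := hcov j
          have hne : i'' ≠ i.1 := by
            rintro rfl
            exact h1 ⟨hi'', hz⟩
          have hmemK : col A j ∈ K := by
            rw [hK]
            refine Submodule.mem_sup_left ?_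
            exact (le_iSup₂ (f := fun j' (_ : j' ≠ i.1) => U j') i'' hne : U i'' ≤ R) hi''
          rw [hP]
          show (U i.1).subtype (((U i.1).projectionOnto K hcompl) (col A j)) = 0
          rw [Submodule.projectionOnto_apply_of_mem_right hcompl hmemK, map_zero]
    have hentry : (LinearMap.toMatrix' P * A) i' j
        = ((LinearMap.toMatrix' P).mulVec (col A j)) i' := by
      simp [Matrix.mul_apply, Matrix.mulVec, dotProduct, col]
    have hcol : (LinearMap.toMatrix' P).mulVec (col A j) = P (col A j) := by
      rw [← Matrix.toLin'_apply, Matrix.toLin'_toMatrix']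
    rw [hentry, hcol, hPcol]
    simp [col, mul_comm]
  -- Step C: linear independence of the indicator family together with zero-column singletons
  set w : ({i : Fin S // i ∈ used} ⊕ {j : Fin n // ∀ i, A i j = 0}) → (Fin n → ℝ) :=
    Sum.elim vξ (fun j₀ => Pi.single j₀.1 1) with hw
  have hcolzero : ∀ j₀ : {j : Fin n // ∀ i, A i j = 0}, col A j₀.1 = 0 := by
    intro j₀; funext i; exact j₀.2 i
  have hwfeas : ∀ s, w s ∈ feas A := by
    rintro (i | j₀)
    · exact hfeas i
    · exact single_mem_feas A (hcolzero j₀)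
  have hwind : LinearIndependent ℝ w := by
    rw [Fintype.linearIndependent_iff]
    intro g hg
    have heval : ∀ j : Fin n, ∑ s, g s * w s j = 0 := by
      intro j
      have := congrFun hg j
      rw [Finset.sum_apply] at this
      simpa using this
    intro s
    match s with
    | Sum.inl i =>
      obtain ⟨j, hj0, hjU⟩ : ∃ j, col A j ≠ 0 ∧ col A j ∈ U i.1 := by
        have h2 : i.1 ∈ Finset.univ.filter (fun i => ∃ j, col A j ≠ 0 ∧ col A j ∈ U i) := by
          rw [← hused]; exact i.2
        exact (Finset.mem_filter.mp h2).2
      have hsum : ∑ s', g s' * w s' j = g (Sum.inl i) := by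
        rw [Finset.sum_eq_single (Sum.inl i)]
        · have : w (Sum.inl i) j = 1 := if_pos ⟨hjU, hj0⟩
          rw [this, mul_one]
        · rintro (i' | j₀) _ hne
          · have hii : i'.1 ≠ i.1 := by
              intro h
              exact hne (by rw [Sum.inl.injEq]; exact Subtype.ext h)
            have : w (Sum.inl i') j = 0 := by
              refine if_neg ?_
              rintro ⟨hmem, hnz⟩
              exact hnz (Submodule.disjoint_def.mp (hind.pairwiseDisjoint hii) _ hmem hjU)
            rw [this, mul_zero]
          · have hne2 : j ≠ j₀.1 := by
              intro h
              exact hj0 (h ▸ hcolzero j₀)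
            have : w (Sum.inr j₀) j = 0 := Pi.single_eq_of_ne hne2 1
            rw [this, mul_zero]
        · intro h; exact absurd (Finset.mem_univ _) h
      rw [heval j] at hsum
      exact hsum.symm
    | Sum.inr j₀ =>
      have hsum : ∑ s', g s' * w s' j₀.1 = g (Sum.inr j₀) := by
        rw [Finset.sum_eq_single (Sum.inr j₀)]
        · have : w (Sum.inr j₀) j₀.1 = 1 := Pi.single_eq_same j₀.1 1
          rw [this, mul_one]
        · rintro (i' | j₀') _ hne
          · have : w (Sum.inl i') j₀.1 = 0 := by
              refine if_neg ?_
              rintro ⟨_, hnz⟩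
              exact hnz (hcolzero j₀)
            rw [this, mul_zero]
          · have hne2 : j₀.1 ≠ j₀'.1 := by
              intro h
              exact hne (by rw [Sum.inr.injEq]; exact (Subtype.ext h).symm)
            have : w (Sum.inr j₀') j₀.1 = 0 := Pi.single_eq_of_ne hne2 1
            rw [this, mul_zero]
        · intro h; exact absurd (Finset.mem_univ _) h
      rw [heval j₀.1] at hsum
      exact hsum.symm
  have hindF : LinearIndependent ℝ (fun s => (⟨w s, hwfeas s⟩ : feas A)) :=
    LinearIndependent.of_comp (feas A).subtype hwind
  have hcard2 := hindF.fintype_card_le_finrank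
  rw [Fintype.card_sum, Fintype.card_coe] at hcard2
  have hScard : used.card + usedᶜ.card = S := by
    rw [Finset.card_add_card_compl, Fintype.card_fin]
  omega

/-- lower bound realization -/
lemma lower : ∃ k : ℕ, finrank ℝ (feas A) ≤ k + Fintype.card {j : Fin n // ∀ i, A i j = 0} ∧
    (k + (m - A.rank) = 0 ∨ k + (m - A.rank) ∈ clusterSet A) := by
  classical
  set J : Finset (Fin n) := Finset.univ.filter (fun j => col A j ≠ 0) with hJ
  -- choose a maximizer of the number of distinct values on `J` among feasible vectors
  set Im : Set ℕ := (fun ξ : Fin n → ℝ => (J.image ξ).card) '' (feas A : Set (Fin n → ℝ)) with hIm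
  have hImne : Im.Nonempty := ⟨_, ⟨0, Submodule.zero_mem _, rfl⟩⟩
  have hImbdd : BddAbove Im := by
    refine ⟨n, ?_⟩
    rintro x ⟨ξ, _, rfl⟩
    refine Finset.card_image_le.trans ?_
    exact (Finset.card_le_univ _).trans (by simp)
  obtain ⟨ξs, hξsfeas, hξscard⟩ : ∃ ξ, ξ ∈ feas A ∧ (J.image ξ).card = sSup Im := by
    obtain ⟨ξ, hξ, h⟩ := Nat.sSup_mem hImne hImbdd
    exact ⟨ξ, hξ, h⟩
  have hmax : ∀ ξ ∈ feas A, (J.image ξ).card ≤ (J.image ξs).card := by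
    intro ξ hξ
    rw [hξscard]
    exact le_csSup hImbdd ⟨ξ, hξ, rfl⟩
  -- every feasible vector is constant on the level sets of `ξs`
  have hmaxprop : ∀ ξ ∈ feas A, ∀ j ∈ J, ∀ j' ∈ J, ξs j = ξs j' → ξ j = ξ j' := by
    intro ξ hξ j hj j' hj' heq
    by_contra hne
    set bad : Finset ℝ := insert 0 (Finset.image
      (fun p : Fin n × Fin n => (ξs p.1 - ξs p.2) / (ξ p.2 - ξ p.1)) (J ×ˢ J)) with hbad
    obtain ⟨t, ht⟩ := Infinite.exists_notMem_finset bad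
    have ht0 : t ≠ 0 := fun h => ht (h ▸ Finset.mem_insert_self 0 _)
    set η : Fin n → ℝ := ξs + t • ξ with hη
    have hηfeas : η ∈ feas A :=
      Submodule.add_mem _ hξsfeas (Submodule.smul_mem _ t hξ)
    have hsep : ∀ p ∈ J, ∀ q ∈ J, ξs p ≠ ξs q → η p ≠ η q := by
      intro p hp q hq hne2 hcontra
      have hηeq : ξs p + t * ξ p = ξs q + t * ξ q := by
        simpa [hη, Pi.add_apply, Pi.smul_apply, smul_eq_mul] using hcontra
      have hxy : ξ q ≠ ξ p := by
        intro h
        rw [h] at hηeq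
        exact hne2 (by linarith)
      apply ht
      refine Finset.mem_insert_of_mem ?_
      refine Finset.mem_image.mpr ⟨(p, q), Finset.mem_product.mpr ⟨hp, hq⟩, ?_⟩
      have hsub : ξ q - ξ p ≠ 0 := sub_ne_zero.mpr hxy
      field_simp
      linarith
    have hjj : η j ≠ η j' := by
      intro hcontra
      have hηeq : ξs j + t * ξ j = ξs j' + t * ξ j' := by
        simpa [hη, Pi.add_apply, Pi.smul_apply, smul_eq_mul] using hcontra
      rw [heq] at hηeq
      have : t * (ξ j - ξ j') = 0 := by linarith
      rcases mul_eq_zero.mp this with h | h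
      · exact ht0 h
      · exact hne (by linarith)
    -- representatives of the `η`-levels
    have hrep : ∀ v ∈ J.image η, ∃ p, p ∈ J ∧ η p = v := by
      intro v hv
      obtain ⟨p, hp, hpv⟩ := Finset.mem_image.mp hv
      exact ⟨p, hp, hpv⟩
    choose rep hrepJ hrepv using hrep
    have hkey : ∀ p ∈ J, ∀ hv : η p ∈ J.image η, ξs (rep (η p) hv) = ξs p := by
      intro p hp hv
      by_contra hne2
      exact hsep _ (hrepJ _ hv) p hp hne2 (hrepv _ hv)
    have hinj := Finset.inj_on_of_surj_on_of_card_le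
      (s := J.image η) (t := J.image ξs)
      (fun v hv => ξs (rep v hv))
      (fun v hv => Finset.mem_image_of_mem ξs (hrepJ v hv))
      (by
        intro y hy
        obtain ⟨p, hp, rfl⟩ := Finset.mem_image.mp hy
        exact ⟨η p, Finset.mem_image_of_mem η hp, hkey p hp _⟩)
      (hmax η hηfeas)
      (a₁ := η j) (Finset.mem_image_of_mem η hj)
      (a₂ := η j') (Finset.mem_image_of_mem η hj')
    exact hjj (hinj (by rw [hkey j hj, hkey j' hj', heq]))
  -- k is the number of levels of ξs
  set k := (J.image ξs).card with hk
  refine ⟨k, ?_, ?_⟩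
  · -- dimension bound : finrank feas ≤ k + Z
    have hrep2 : ∀ v : {v // v ∈ J.image ξs}, ∃ j, j ∈ J ∧ ξs j = v.1 := by
      intro v
      obtain ⟨j, hj, hjv⟩ := Finset.mem_image.mp v.2
      exact ⟨j, hj, hjv⟩
    choose rep2 hrep2J hrep2v using hrep2
    set φ2 : (Fin n → ℝ) →ₗ[ℝ]
        (({v // v ∈ J.image ξs} → ℝ) × ({j : Fin n // ∀ i, A i j = 0} → ℝ)) :=
      { toFun := fun ξ => (fun v => ξ (rep2 v), fun j₀ => ξ j₀.1)
        map_add' := fun _ _ => rfl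
        map_smul' := fun _ _ => rfl } with hφ2
    have hinj2 : Function.Injective (φ2.comp (feas A).subtype) := by
      rw [← LinearMap.ker_eq_bot]
      rw [Submodule.eq_bot_iff]
      rintro ⟨ξ, hξ⟩ hker
      have h0 : φ2 ξ = 0 := hker
      have h1 : ∀ v, ξ (rep2 v) = 0 := fun v => congrFun (congrArg Prod.fst h0) v
      have h2 : ∀ j₀ : {j : Fin n // ∀ i, A i j = 0}, ξ j₀.1 = 0 :=
        fun j₀ => congrFun (congrArg Prod.snd h0) j₀
      refine Subtype.ext ?_
      funext j
      show ξ j = (0:ℝ)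
      by_cases hz : col A j = 0
      · exact h2 ⟨j, fun i => congrFun hz i⟩
      · have hjJ : j ∈ J := by rw [hJ, Finset.mem_filter]; exact ⟨Finset.mem_univ _, hz⟩
        set v : {v // v ∈ J.image ξs} := ⟨ξs j, Finset.mem_image_of_mem ξs hjJ⟩ with hv
        have := hmaxprop ξ hξ j hjJ (rep2 v) (hrep2J v) (hrep2v v).symm
        rw [this]
        exact h1 v
    have hle := LinearMap.finrank_le_finrank_of_injective hinj2
    rw [Module.finrank_prod, Module.finrank_pi, Module.finrank_pi] at hle
    simpa [Fintype.card_coe] using hle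
  · -- clustering construction
    by_cases h0 : k + (m - A.rank) = 0
    · exact Or.inl h0
    right
    set C : Submodule ℝ (Fin m → ℝ) := Submodule.span ℝ (Set.range (col A)) with hC
    have hCrank : finrank ℝ C = A.rank := by
      rw [Matrix.rank_eq_finrank_span_cols, hC]
      have hr : Set.range (col A) = Set.range Aᵀ := by
        ext x
        constructor <;> rintro ⟨j, rfl⟩
        · exact ⟨j, rfl⟩
        · exact ⟨j, rfl⟩
      rw [hr]
      rfl
    obtain ⟨W, hW⟩ := Submodule.exists_isCompl C
    have hrle : A.rank ≤ m := by simpa using A.rank_le_card_height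
    have hWrank : finrank ℝ W = m - A.rank := by
      have h := Submodule.finrank_add_eq_of_isCompl hW
      rw [Module.finrank_pi, Fintype.card_fin, hCrank] at h
      omega
    set w : ℕ := m - A.rank with hwdef
    let bW : Basis (Fin w) ℝ W := (Module.finBasis ℝ W).reindex (finCongr hWrank)
    obtain ⟨Ms, hMs⟩ := (mem_feas A).mp hξsfeas
    set B : ℝ := if hne : (J.image ξs).Nonempty then (J.image ξs).max' hne else 0 with hB
    have hBge : ∀ v ∈ J.image ξs, v ≤ B := by
      intro v hv
      rw [hB, dif_pos ⟨v, hv⟩]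
      exact Finset.le_max' _ v hv
    set μ : Fin w → ℝ := fun t => B + 1 + (t.1 : ℝ) with hμ
    set T := {v // v ∈ J.image ξs} with hT
    set lam : T ⊕ Fin w → ℝ := Sum.elim (fun v => v.1) μ with hlam
    have hlaminj : Function.Injective lam := by
      rintro (v | t) (v' | t') h
      · exact congrArg Sum.inl (Subtype.ext h)
      · exfalso
        have h1 := hBge v.1 v.2
        have h2 : (0:ℝ) ≤ t'.1 := Nat.cast_nonneg _
        have h3 : v.1 = B + 1 + t'.1 := h
        linarith
      · exfalso
        have h1 := hBge v'.1 v'.2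
        have h2 : (0:ℝ) ≤ t.1 := Nat.cast_nonneg _
        have h3 : B + 1 + t.1 = v'.1 := h
        linarith
      · have h3 : B + 1 + (t.1:ℝ) = B + 1 + t'.1 := h
        have : (t.1:ℝ) = t'.1 := by linarith
        exact congrArg Sum.inr (Fin.ext (Nat.cast_injective this))
    set projC : (Fin m → ℝ) →ₗ[ℝ] (Fin m → ℝ) :=
      C.subtype ∘ₗ (C.linearProjOfIsCompl W hW) with hprojC
    set D : W →ₗ[ℝ] W := bW.constr ℝ (fun t => μ t • bW t) with hD
    set G : (Fin m → ℝ) →ₗ[ℝ] (Fin m → ℝ) :=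
      Ms.mulVecLin ∘ₗ projC + W.subtype ∘ₗ D ∘ₗ (W.linearProjOfIsCompl C hW.symm) with hG
    have hGcol : ∀ j ∈ J, G (col A j) = ξs j • col A j := by
      intro j hjJ
      have hmem : col A j ∈ C := Submodule.subset_span ⟨j, rfl⟩
      have hpC : projC (col A j) = col A j := by
        rw [hprojC]
        show C.subtype ((C.projectionOnto W hW) (col A j)) = col A j
        rw [Submodule.projectionOnto_apply_of_mem_left hW hmem]
        rfl
      have hpW : (W.linearProjOfIsCompl C hW.symm) (col A j) = 0 :=
        Submodule.projectionOnto_apply_of_mem_right hW.symm hmem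
      rw [hG]
      simp only [LinearMap.add_apply, LinearMap.comp_apply]
      rw [hpC, hpW]
      simp only [map_zero]
      rw [add_zero, Matrix.mulVecLin_apply]
      exact mul_col A hMs j
    have hGw : ∀ t : Fin w, G ((bW t : W) : Fin m → ℝ) = μ t • ((bW t : W) : Fin m → ℝ) := by
      intro t
      have hmem : ((bW t : W) : Fin m → ℝ) ∈ W := (bW t).2
      have hpC : projC ((bW t : W) : Fin m → ℝ) = 0 := by
        rw [hprojC]
        show C.subtype ((C.projectionOnto W hW) _) = 0
        rw [Submodule.projectionOnto_apply_of_mem_right hW hmem, map_zero]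
      have hpW : (W.linearProjOfIsCompl C hW.symm) ((bW t : W) : Fin m → ℝ) = bW t :=
        Submodule.linearProjOfIsCompl_apply_left hW.symm (bW t)
      rw [hG]
      simp only [LinearMap.add_apply, LinearMap.comp_apply]
      rw [hpC, hpW]
      simp only [map_zero]
      rw [zero_add, hD, Basis.constr_basis]
      rfl
    set V : T ⊕ Fin w → Submodule ℝ (Fin m → ℝ) :=
      Sum.elim (fun v => Submodule.span ℝ ((col A) '' {j | j ∈ J ∧ ξs j = v.1}))
        (fun t => Submodule.span ℝ {((bW t : W) : Fin m → ℝ)}) with hV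
    have hVeig : ∀ i, V i ≤ Module.End.eigenspace G (lam i) := by
      rintro (v | t)
      · rw [hV]
        refine Submodule.span_le.mpr ?_
        rintro x ⟨j, ⟨hjJ, hjv⟩, rfl⟩
        rw [SetLike.mem_coe, Module.End.mem_eigenspace_iff]
        rw [hGcol j hjJ, hjv]
        rfl
      · rw [hV]
        refine Submodule.span_le.mpr ?_
        rintro x hx
        rw [Set.mem_singleton_iff] at hx
        subst hx
        rw [SetLike.mem_coe, Module.End.mem_eigenspace_iff]
        exact hGw t
    have hVind : iSupIndep V :=
      ((Module.End.eigenspaces_iSupIndep G).comp hlaminj).mono hVeig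
    have hVbot : ∀ i, V i ≠ ⊥ := by
      rintro (v | t)
      · obtain ⟨j, hjJ, hjv⟩ : ∃ j, j ∈ J ∧ ξs j = v.1 := by
          obtain ⟨j, hj, hjv⟩ := Finset.mem_image.mp v.2
          exact ⟨j, hj, hjv⟩
        intro hbot
        have hmem : col A j ∈ V (Sum.inl v) := by
          rw [hV]
          exact Submodule.subset_span ⟨j, ⟨hjJ, hjv⟩, rfl⟩
        have hz : col A j ≠ 0 := by
          have h := hjJ
          rw [hJ, Finset.mem_filter] at h
          exact h.2
        rw [hbot, Submodule.mem_bot] at hmem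
        exact hz hmem
      · intro hbot
        have hmem : ((bW t : W) : Fin m → ℝ) ∈ V (Sum.inr t) := by
          rw [hV]
          exact Submodule.subset_span rfl
        rw [hbot, Submodule.mem_bot] at hmem
        exact bW.ne_zero t (Submodule.coe_eq_zero.mp hmem)
    have hne : Nonempty (T ⊕ Fin w) := by
      have hcardT : Fintype.card T = k := Fintype.card_coe _
      have hcs : Fintype.card (T ⊕ Fin w) = k + w := by
        rw [Fintype.card_sum, hcardT, Fintype.card_fin]
      rw [← Fintype.card_pos_iff, hcs]
      omega
    have hVcov : ∀ j : Fin n, ∃ i, col A j ∈ V i := by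
      intro j
      by_cases hz : col A j = 0
      · obtain ⟨i⟩ := hne
        exact ⟨i, hz ▸ Submodule.zero_mem _⟩
      · have hjJ : j ∈ J := by rw [hJ, Finset.mem_filter]; exact ⟨Finset.mem_univ _, hz⟩
        refine ⟨Sum.inl ⟨ξs j, Finset.mem_image_of_mem ξs hjJ⟩, ?_⟩
        rw [hV]
        exact Submodule.subset_span ⟨j, ⟨hjJ, rfl⟩, rfl⟩
    have hcardsum : Fintype.card (T ⊕ Fin w) = k + (m - A.rank) := by
      have hcardT : Fintype.card T = k := Fintype.card_coe _
      rw [Fintype.card_sum, Fintype.card_fin, hcardT]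
    let e := Fintype.equivFinOfCardEq hcardsum
    refine ⟨V ∘ e.symm, fun i => hVbot _, hVind.comp e.symm.injective, fun j => ?_⟩
    obtain ⟨i, hi⟩ := hVcov j
    refine ⟨e i, ?_⟩
    show col A j ∈ (V ∘ e.symm) (e i)
    simpa using hi

lemma zle : Fintype.card {j : Fin n // ∀ i, A i j = 0} ≤ finrank ℝ (feas A) := by
  classical
  have hb : LinearIndependent ℝ
      (fun j₀ : {j : Fin n // ∀ i, A i j = 0} => (Pi.basisFun ℝ (Fin n)) j₀.1) :=
    (Pi.basisFun ℝ (Fin n)).linearIndependent.comp Subtype.val Subtype.val_injective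
  have hb2 : LinearIndependent ℝ
      (fun j₀ : {j : Fin n // ∀ i, A i j = 0} => (Pi.single j₀.1 1 : Fin n → ℝ)) := by
    have he : (fun j₀ : {j : Fin n // ∀ i, A i j = 0} => (Pi.basisFun ℝ (Fin n)) j₀.1)
        = fun j₀ => (Pi.single j₀.1 1 : Fin n → ℝ) := by
      funext j₀
      exact Pi.basisFun_apply ℝ (Fin n) j₀.1
    rwa [he] at hb
  have hmem : ∀ j₀ : {j : Fin n // ∀ i, A i j = 0}, (Pi.single j₀.1 1 : Fin n → ℝ) ∈ feas A :=
    fun j₀ => single_mem_feas A (funext fun i => j₀.2 i)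
  have hindF : LinearIndependent ℝ
      (fun j₀ => (⟨Pi.single j₀.1 1, hmem j₀⟩ : feas A)) :=
    LinearIndependent.of_comp (feas A).subtype hb2
  simpa using hindF.fintype_card_le_finrank

lemma cluster_eq :
    clusteringNumber A + Fintype.card {j : Fin n // ∀ i, A i j = 0}
      = finrank ℝ (feas A) + (m - A.rank) := by
  obtain ⟨k, hk1, hk2⟩ := lower A
  have hzle := zle A
  have hbdd : BddAbove (clusterSet A) := by
    refine ⟨finrank ℝ (feas A) + (m - A.rank), fun S hS => ?_⟩
    have := upper A hS
    omega
  rw [clusteringNumber_eq]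
  apply le_antisymm
  · by_cases hne : (clusterSet A).Nonempty
    · exact upper A (Nat.sSup_mem hne hbdd)
    · rw [Set.not_nonempty_iff_eq_empty] at hne
      rw [hne, csSup_empty]
      simp only [Nat.bot_eq_zero, zero_add]
      omega
  · rcases hk2 with h | h
    · omega
    · have hle : k + (m - A.rank) ≤ sSup (clusterSet A) := le_csSup hbdd h
      omega

end Stmt6Aux

/-- For `A ∈ ℝ^{m×n}` of rank `r` with `Z` zero columns, the dimension of the solution space of
`M A = A diag(ξ)` equals `cl⊕(A) + (m-1)(m-r) + Z`. -/
theorem stmt6 {m n : ℕ} (A : Matrix (Fin m) (Fin n) ℝ) :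
    Module.finrank ℝ (solSpace A) =
      clusteringNumber A + (m - 1) * (m - A.rank) +
        Fintype.card {j : Fin n // ∀ i, A i j = 0} := by
  have h1 := Stmt6Aux.finrank_solSpace A
  have h2 := Stmt6Aux.cluster_eq A
  have hr : A.rank ≤ m := by
    simpa using A.rank_le_card_height
  have key : m * (m - A.rank) = (m - A.rank) + (m - 1) * (m - A.rank) := by
    rcases Nat.eq_zero_or_pos m with hm | hm
    · subst hm; simp
    · nth_rewrite 1 [← Nat.succ_pred_eq_of_pos hm]
      rw [Nat.succ_mul, Nat.pred_eq_sub_one]; omega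
  rw [h1, key]; omega
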